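/- arXiv:1004.2253 — 2 statements merged into one kernel-verified Lean document; each statement's English description precedes it below -/
import Mathlib

section
/- Let V be a finite-dimensional vector space over a field k and d : V → V a linear map with d ∘ d = 0. Then there exists a linear map h : V → V such that h ∘ h = 0, d ∘ h ∘ d = d, and h ∘ d ∘ h = h. -/
/-- For a finite-dimensional vector space `V` over a field `k`
and a linear map `d : V → V` with `d ∘ d = 0`, there exists a linear map
`h : V → V` with `h ∘ h = 0`, `d ∘ h ∘ d = d` and `h ∘ d ∘ h = h`. -/
theorem exists_homotopy (k V : Type*) [Field k] [AddCommGroup V] [Module k V]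
    [FiniteDimensional k V] (d : V →ₗ[k] V) (hd : d ∘ₗ d = 0) :
    ∃ h : V →ₗ[k] V, h ∘ₗ h = 0 ∧ d ∘ₗ h ∘ₗ d = d ∧ h ∘ₗ d ∘ₗ h = h := by
  classical
  set K := LinearMap.ker d with hK
  set R := LinearMap.range d with hR
  have hRK : R ≤ K := by
    rintro x ⟨y, rfl⟩
    have : (d ∘ₗ d) y = 0 := by rw [hd]; rfl
    simpa [hK, LinearMap.mem_ker] using this
  obtain ⟨C, hC⟩ := Submodule.exists_isCompl K
  obtain ⟨W', hW'⟩ := Submodule.exists_isCompl (R.comap K.subtype)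
  set W : Submodule k V := W'.map K.subtype with hWdef
  have hWK : W ≤ K := by
    rintro x ⟨y, hy, rfl⟩; exact y.2
  have hRW_sup : R ⊔ W = K := by
    have h1 : (R.comap K.subtype).map K.subtype = R := by
      rw [Submodule.map_comap_subtype]; exact inf_eq_right.mpr hRK
    have h2 : (R.comap K.subtype ⊔ W').map K.subtype = K := by
      rw [hW'.sup_eq_top, Submodule.map_top, Submodule.range_subtype]
    rw [← h1, ← Submodule.map_sup, h2]
  have hRW_disj : Disjoint R W := by
    rw [Submodule.disjoint_def]
    rintro x hxR ⟨y, hy, rfl⟩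
    have hx' : (⟨(y : V), y.2⟩ : K) ∈ R.comap K.subtype := by
      simpa [Submodule.mem_comap] using hxR
    have : (⟨(y : V), y.2⟩ : K) = 0 :=
      hW'.disjoint.le_bot ⟨hx', by simpa using hy⟩
    simpa using congrArg (K.subtype) this
  -- IsCompl R (W ⊔ C)
  have hcompl : IsCompl R (W ⊔ C) := by
    constructor
    · rw [Submodule.disjoint_def]
      intro x hxR hxWC
      obtain ⟨w, hw, c, hc, rfl⟩ := Submodule.mem_sup.mp hxWC
      have hcK : c ∈ K := by
        have : w + c - w ∈ K := sub_mem (hRK hxR) (hWK hw)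
        simpa using this
      have hc0 : c = 0 := Submodule.disjoint_def.mp hC.disjoint c hcK hc
      subst hc0
      have : w + 0 ∈ R := hxR
      have hw' : w ∈ R := by simpa using this
      have : w = 0 := hRW_disj.le_bot ⟨hw', hw⟩
      simp [this]
    · rw [codisjoint_iff, ← sup_assoc, hRW_sup, hC.sup_eq_top]
  -- the equivalence C ≃ R induced by d
  have hmem : ∀ c : C, d (c : V) ∈ R := fun c => LinearMap.mem_range_self d (c : V)
  set f : C →ₗ[k] R := LinearMap.codRestrict R (d ∘ₗ C.subtype) hmem with hf
  have hfinj : Function.Injective f := by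
    intro a b hab
    have : d (a - b : C) = 0 := by
      have := congrArg (Subtype.val) hab
      simp only [hf, LinearMap.codRestrict_apply, LinearMap.comp_apply,
        Submodule.subtype_apply] at this
      simp [map_sub, this]
      exact sub_eq_zero.mpr this
    have hmemK : ((a - b : C) : V) ∈ K := this
    have : ((a - b : C) : V) = 0 := hC.disjoint.le_bot ⟨hmemK, (a - b).2⟩
    have : (a - b : C) = 0 := Subtype.ext this
    exact sub_eq_zero.mp this
  have hfsurj : Function.Surjective f := by
    rintro ⟨r, v, rfl⟩
    obtain ⟨x, hxK, c, hcC, hsum⟩ := Submodule.mem_sup.mp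
      (hC.sup_eq_top ▸ Submodule.mem_top : v ∈ K ⊔ C)
    refine ⟨⟨c, hcC⟩, ?_⟩
    apply Subtype.ext
    simp only [hf, LinearMap.codRestrict_apply, LinearMap.comp_apply,
      Submodule.subtype_apply]
    have : d v = d x + d c := by rw [← map_add, hsum]
    have hx0 : d x = 0 := hxK
    simp [this, hx0]
    rfl
  set e := LinearEquiv.ofBijective f ⟨hfinj, hfsurj⟩ with he
  set p := Submodule.projectionOnto R (W ⊔ C) hcompl with hp
  set h : V →ₗ[k] V := C.subtype ∘ₗ (e.symm : R →ₗ[k] C) ∘ₗ p with hh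
  have key1 : ∀ c : C, d (c : V) = ((e c : R) : V) := fun c => rfl
  have key2 : ∀ c : C, p (c : V) = 0 := fun c =>
    Submodule.projectionOnto_apply_of_mem_right hcompl
      (Submodule.mem_sup_right c.2)
  have key3 : ∀ r : R, p (r : V) = r := fun r =>
    Submodule.projectionOnto_apply_left hcompl r
  refine ⟨h, ?_, ?_, ?_⟩
  · ext v
    simp only [hh, LinearMap.comp_apply, LinearMap.coe_comp, Function.comp_apply,
      LinearEquiv.coe_coe, Submodule.subtype_apply, LinearMap.zero_apply]
    rw [key2, map_zero]
    simp
  · ext v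
    simp only [LinearMap.comp_apply, hh, LinearMap.coe_comp, Function.comp_apply,
      LinearEquiv.coe_coe, Submodule.subtype_apply]
    rw [show p (d v) = ⟨d v, LinearMap.mem_range_self d v⟩ from
      key3 ⟨d v, LinearMap.mem_range_self d v⟩, key1, LinearEquiv.apply_symm_apply]
  · ext v
    simp only [LinearMap.comp_apply, hh, LinearMap.coe_comp, Function.comp_apply,
      LinearEquiv.coe_coe, Submodule.subtype_apply]
    rw [key1, key3, LinearEquiv.symm_apply_apply]
end

section
/- Let V be a finite-dimensional vector space over a field k of characteristic ≠ 2, and let I : V → V be a linear map such that ker(I∘I) ∩ range(I∘I) = {0}. Then there exists a linear map H : V → V such that H ∘ (I∘I) = (I∘I) ∘ H and the map P := id − (I∘H + H∘I) is idempotent (P ∘ P = P) with range(P) ⊆ ker(I∘I). -/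
/-- Let `V` be a finite-dimensional vector space over a field
`k` of characteristic `≠ 2`, and `I : V → V` a linear map with
`ker(I∘I) ∩ range(I∘I) = {0}`. Then there is a linear map `H : V → V` commuting
with `I∘I` such that `P := id − (I∘H + H∘I)` is idempotent with
`range P ⊆ ker(I∘I)`. -/
theorem exists_equivariant_homotopy (k V : Type*) [Field k] [AddCommGroup V]
    [Module k V] [FiniteDimensional k V] (hchar : (2 : k) ≠ 0)
    (I : V →ₗ[k] V)
    (hker : LinearMap.ker (I ∘ₗ I) ⊓ LinearMap.range (I ∘ₗ I) = ⊥) :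
    ∃ H : V →ₗ[k] V,
      H ∘ₗ (I ∘ₗ I) = (I ∘ₗ I) ∘ₗ H ∧
      (LinearMap.id - (I ∘ₗ H + H ∘ₗ I)) ∘ₗ (LinearMap.id - (I ∘ₗ H + H ∘ₗ I))
        = LinearMap.id - (I ∘ₗ H + H ∘ₗ I) ∧
      LinearMap.range (LinearMap.id - (I ∘ₗ H + H ∘ₗ I))
        ≤ LinearMap.ker (I ∘ₗ I) := by
  classical
  set A : V →ₗ[k] V := I ∘ₗ I with hA
  set K : Submodule k V := LinearMap.ker A with hK
  set R : Submodule k V := LinearMap.range A with hR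
  have hdis : Disjoint K R := disjoint_iff.mpr hker
  have hsup : K ⊔ R = ⊤ := by
    apply Submodule.eq_top_of_disjoint K R _ hdis
    rw [add_comm]
    exact A.finrank_range_add_finrank_ker.ge
  have hcompl : IsCompl K R := ⟨hdis, codisjoint_iff.mpr hsup⟩
  -- `I` preserves `K` and `R`
  have hIK : ∀ x ∈ K, I x ∈ K := by
    intro x hx
    have hx' : A x = 0 := hx
    show A (I x) = 0
    have : A (I x) = I (A x) := by
      simp only [hA, LinearMap.comp_apply]
    rw [this, hx', map_zero]
  have hIR : ∀ x ∈ R, I x ∈ R := by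
    rintro x ⟨y, rfl⟩
    exact ⟨I y, by simp only [hA, LinearMap.comp_apply]⟩
  have hAR : ∀ x ∈ R, A x ∈ R := fun x _ => ⟨x, rfl⟩
  -- restriction of `A` to `R` is bijective
  let Ar : R →ₗ[k] R := A.restrict hAR
  have hArinj : Function.Injective Ar := by
    intro x y hxy
    have h0 : Ar (x - y) = 0 := by rw [map_sub, hxy, sub_self]
    have h0' : A ((x : V) - y) = 0 := by
      have := congrArg (Subtype.val) h0
      simpa [Ar, LinearMap.restrict_coe_apply] using this
    have hmem : ((x : V) - y) ∈ K ⊓ R := ⟨h0', sub_mem x.2 y.2⟩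
    rw [hker, Submodule.mem_bot, sub_eq_zero] at hmem
    exact Subtype.ext hmem
  have hArbij : Function.Bijective Ar :=
    ⟨hArinj, LinearMap.injective_iff_surjective.mp hArinj⟩
  let e : R ≃ₗ[k] R := LinearEquiv.ofBijective Ar hArbij
  have he_apply : ∀ w : R, ((e w : R) : V) = A w := fun w => rfl
  -- the projection onto `R` along `K`
  let projR : V →ₗ[k] R := R.linearProjOfIsCompl K hcompl.symm
  let π : V →ₗ[k] V := R.subtype ∘ₗ projR
  have hπ_mem : ∀ x, π x ∈ R := fun x => (projR x).2
  have hπR : ∀ x ∈ R, π x = x := by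
    intro x hx
    show (projR x : V) = x
    rw [show projR x = ⟨x, hx⟩ from
      Submodule.linearProjOfIsCompl_apply_left hcompl.symm ⟨x, hx⟩]
  have hπK : ∀ x ∈ K, π x = 0 := by
    intro x hx
    show (projR x : V) = 0
    rw [show projR x = 0 from Submodule.linearProjOfIsCompl_apply_right' hcompl.symm hx,
      Submodule.coe_zero]
  have hdecomp : ∀ x : V, x - π x ∈ K := by
    intro x
    have h := Submodule.projection_add_projection_eq_self hcompl x
    have heq : x - π x = (K.linearProjOfIsCompl R hcompl x : V) := by
      show x - (projR x : V) = _
      rw [sub_eq_iff_eq_add]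
      exact h.symm
    rw [heq]; exact (K.linearProjOfIsCompl R hcompl x).2
  have hAfix : ∀ x : V, A (π x) = A x := by
    intro x
    have h0 : A (x - π x) = 0 := hdecomp x
    rw [map_sub, sub_eq_zero] at h0
    exact h0.symm
  -- the partial inverse of `A`
  let B : V →ₗ[k] V := R.subtype ∘ₗ (e.symm : R →ₗ[k] R) ∘ₗ projR
  have hB_apply : ∀ x : V, B x = ((e.symm (projR x) : R) : V) := fun x => rfl
  have hAB : A ∘ₗ B = π := by
    ext x
    show A ((e.symm (projR x) : R) : V) = (projR x : V)
    rw [← he_apply (e.symm (projR x)), e.apply_symm_apply]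
  have hBA : B ∘ₗ A = π := by
    ext x
    show ((e.symm (projR (A x)) : R) : V) = (projR x : V)
    congr 1
    rw [LinearEquiv.symm_apply_eq]
    apply Subtype.ext
    rw [he_apply]
    show π (A x) = A (π x)
    rw [hAfix x]
    exact hπR (A x) ⟨x, rfl⟩
  -- `B` commutes with `I`
  have hIB : I ∘ₗ B = B ∘ₗ I := by
    ext x
    obtain ⟨u, hu, v, hv, rfl⟩ := Submodule.mem_sup.mp (hsup ▸ Submodule.mem_top : x ∈ K ⊔ R)
    have hBu : B u = 0 := by
      rw [hB_apply, show projR u = 0 from Submodule.linearProjOfIsCompl_apply_right' hcompl.symm hu,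
        map_zero, Submodule.coe_zero]
    have hBIu : B (I u) = 0 := by
      rw [hB_apply, show projR (I u) = 0 from Submodule.linearProjOfIsCompl_apply_right' hcompl.symm (hIK u hu),
        map_zero, Submodule.coe_zero]
    have key : I (B v) = B (I v) := by
      rw [hB_apply, hB_apply]
      rw [show projR v = ⟨v, hv⟩ from
        Submodule.linearProjOfIsCompl_apply_left hcompl.symm ⟨v, hv⟩]
      rw [show projR (I v) = ⟨I v, hIR v hv⟩ from
        Submodule.linearProjOfIsCompl_apply_left hcompl.symm ⟨I v, hIR v hv⟩]
      have : (⟨I v, hIR v hv⟩ : R) = e ⟨I ((e.symm ⟨v, hv⟩ : R) : V), hIR _ (e.symm ⟨v, hv⟩).2⟩ := by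
        apply Subtype.ext
        rw [he_apply]
        show I v = A (I ((e.symm ⟨v, hv⟩ : R) : V))
        have hcomm : A (I ((e.symm ⟨v, hv⟩ : R) : V)) = I (A ((e.symm ⟨v, hv⟩ : R) : V)) := by
          simp only [hA, LinearMap.comp_apply]
        rw [hcomm, ← he_apply (e.symm ⟨v, hv⟩), e.apply_symm_apply]
      rw [this, e.symm_apply_apply]
    simp only [LinearMap.comp_apply, map_add]
    rw [hBu, hBIu, map_zero]
    simp only [zero_add]
    exact key
  -- the homotopy
  set H : V →ₗ[k] V := (2 : k)⁻¹ • (B ∘ₗ I) with hHdef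
  have hsum : I ∘ₗ H + H ∘ₗ I = π := by
    ext x
    have h1 : I (B (I x)) = B (I (I x)) := by
      have := LinearMap.congr_fun hIB (I x)
      simpa [LinearMap.comp_apply] using this
    have h2 : B (A x) = π x := LinearMap.congr_fun hBA x
    have h3 : B (I (I x)) = π x := h2
    show I (H x) + H (I x) = π x
    rw [hHdef]
    simp only [LinearMap.smul_apply, LinearMap.comp_apply, map_smul]
    rw [h1, h3, ← add_smul]
    have h4 : (2 : k)⁻¹ + (2 : k)⁻¹ = 1 := by rw [← two_mul, mul_inv_cancel₀ hchar]
    rw [h4, one_smul]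
  refine ⟨H, ?_, ?_, ?_⟩
  · -- H commutes with A
    ext x
    show H (A x) = A (H x)
    rw [hHdef]
    simp only [LinearMap.smul_apply, LinearMap.comp_apply, map_smul]
    congr 1
    have h1 : B (I (A x)) = B (A (I x)) := rfl
    have h2 : B (A (I x)) = π (I x) := LinearMap.congr_fun hBA (I x)
    have h3 : A (B (I x)) = π (I x) := LinearMap.congr_fun hAB (I x)
    rw [h1, h2, h3]
  · -- idempotent
    rw [hsum]
    have hπ2 : π ∘ₗ π = π := by
      ext x
      show π (π x) = π x
      exact hπR (π x) (hπ_mem x)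
    rw [LinearMap.sub_comp, LinearMap.comp_sub, LinearMap.comp_sub,
      LinearMap.id_comp, LinearMap.comp_id, hπ2]
    simp
  · -- range condition
    rw [hsum]
    rintro x ⟨y, rfl⟩
    simpa using hdecomp y
end
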